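/- Let G be a group. The first relative cohomology H¹_{/b}(G), i.e., the first cohomology of the quotient complex C*(G)/C*_b(G), is isomorphic to the space Q(G) of homogeneous quasimorphisms on G. -/

import Mathlib

def IsQuasimorphism {G : Type*} [Group G] (φ : G → ℝ) : Prop :=
  ∃ C : ℝ, ∀ g h : G, |φ (g * h) - φ g - φ h| ≤ C

def IsHomogeneous {G : Type*} [Group G] (φ : G → ℝ) : Prop :=
  ∀ (g : G) (n : ℤ), φ (g ^ n) = n * φ g

open Filter Topology

section Homog

variable {G : Type*} [Group G]

private lemma quasi_nonneg {φ : G → ℝ} {C : ℝ}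
    (hC : ∀ g h : G, |φ (g * h) - φ g - φ h| ≤ C) : 0 ≤ C :=
  le_trans (abs_nonneg _) (hC 1 1)

private lemma quasi_pow_bound {φ : G → ℝ} {C : ℝ}
    (hC : ∀ g h : G, |φ (g * h) - φ g - φ h| ≤ C) (g : G) :
    ∀ n : ℕ, |φ (g ^ (n + 1)) - (n + 1 : ℝ) * φ g| ≤ n * C := by
  intro n
  induction n with
  | zero => simp
  | succ k ih =>
      have h1 : |φ (g ^ (k + 1) * g) - φ (g ^ (k + 1)) - φ g| ≤ C := hC _ _
      rw [pow_succ]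
      push_cast at ih ⊢
      calc |φ (g ^ (k + 1) * g) - (k + 1 + 1 : ℝ) * φ g|
          = |(φ (g ^ (k + 1) * g) - φ (g ^ (k + 1)) - φ g)
              + (φ (g ^ (k + 1)) - (k + 1 : ℝ) * φ g)| := by congr 1; ring
        _ ≤ |φ (g ^ (k + 1) * g) - φ (g ^ (k + 1)) - φ g|
              + |φ (g ^ (k + 1)) - (k + 1 : ℝ) * φ g| := abs_add_le _ _
        _ ≤ C + k * C := add_le_add h1 ih
        _ = (k + 1 : ℝ) * C := by ring

private lemma quasi_pow_bound' {φ : G → ℝ} {C : ℝ}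
    (hC : ∀ g h : G, |φ (g * h) - φ g - φ h| ≤ C) (g : G) {n : ℕ} (hn : 0 < n) :
    |φ (g ^ n) - (n : ℝ) * φ g| ≤ n * C := by
  obtain ⟨k, rfl⟩ := Nat.exists_eq_succ_of_ne_zero hn.ne'
  have h := quasi_pow_bound hC g k
  have hC0 := quasi_nonneg hC
  push_cast
  nlinarith [abs_nonneg (φ (g ^ (k + 1)) - (k + 1 : ℝ) * φ g)]

private lemma quasi_pair_bound {φ : G → ℝ} {C : ℝ}
    (hC : ∀ g h : G, |φ (g * h) - φ g - φ h| ≤ C) (g : G) {m n : ℕ}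
    (hm : 0 < m) (hn : 0 < n) :
    |φ (g ^ m) / m - φ (g ^ n) / n| ≤ C / m + C / n := by
  have hm' : (0 : ℝ) < m := by exact_mod_cast hm
  have hn' : (0 : ℝ) < n := by exact_mod_cast hn
  have h1 : |φ (g ^ (m * n)) - (n : ℝ) * φ (g ^ m)| ≤ n * C := by
    have := quasi_pow_bound' hC (g ^ m) hn
    rwa [← pow_mul] at this
  have h2 : |φ (g ^ (m * n)) - (m : ℝ) * φ (g ^ n)| ≤ m * C := by
    have := quasi_pow_bound' hC (g ^ n) hm
    rw [← pow_mul, mul_comm n m] at this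
    exact this
  have key : |(n : ℝ) * φ (g ^ m) - (m : ℝ) * φ (g ^ n)| ≤ n * C + m * C := by
    calc |(n : ℝ) * φ (g ^ m) - (m : ℝ) * φ (g ^ n)|
        = |(φ (g ^ (m * n)) - (m : ℝ) * φ (g ^ n))
            - (φ (g ^ (m * n)) - (n : ℝ) * φ (g ^ m))| := by ring_nf
      _ ≤ |φ (g ^ (m * n)) - (m : ℝ) * φ (g ^ n)|
            + |φ (g ^ (m * n)) - (n : ℝ) * φ (g ^ m)| := abs_sub _ _
      _ ≤ m * C + n * C := add_le_add h2 h1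
      _ = n * C + m * C := by ring
  have heq : φ (g ^ m) / m - φ (g ^ n) / n
      = ((n : ℝ) * φ (g ^ m) - (m : ℝ) * φ (g ^ n)) / (m * n) := by
    field_simp
  rw [heq, abs_div, abs_of_pos (mul_pos hm' hn')]
  rw [div_le_iff₀ (mul_pos hm' hn')]
  calc |(n : ℝ) * φ (g ^ m) - (m : ℝ) * φ (g ^ n)| ≤ n * C + m * C := key
    _ = (C / m + C / n) * (m * n) := by field_simp

private lemma tendsto_aux {u v : ℕ → ℝ} {L K : ℝ}
    (hu : Tendsto u atTop (nhds L))
    (h : ∀ n : ℕ, 0 < n → |v n - u n| ≤ K / n) :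
    Tendsto v atTop (nhds L) := by
  have h0 : Tendsto (fun n : ℕ => K / n) atTop (nhds 0) :=
    tendsto_const_div_atTop_nhds_zero_nat K
  have hd : Tendsto (fun n => v n - u n) atTop (nhds 0) := by
    apply squeeze_zero_norm' _ h0
    filter_upwards [eventually_gt_atTop 0] with n hn
    exact h n hn
  have := hd.add hu
  simpa using this

noncomputable def homog (φ : G → ℝ) : G → ℝ := fun g =>
  letI := Classical.propDecidable (IsQuasimorphism φ)
  if IsQuasimorphism φ then limUnder atTop (fun n : ℕ => φ (g ^ n) / n) else φ g

private lemma homog_tendsto {φ : G → ℝ} (hφ : IsQuasimorphism φ) (g : G) :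
    Tendsto (fun n : ℕ => φ (g ^ n) / n) atTop (nhds (homog φ g)) := by
  obtain ⟨C, hC⟩ := hφ
  have hC0 := quasi_nonneg hC
  have hcauchy : CauchySeq (fun n : ℕ => φ (g ^ n) / n) := by
    rw [Metric.cauchySeq_iff]
    intro ε hε
    set N : ℕ := ⌊2 * C / ε⌋₊ + 1 with hN
    refine ⟨N, fun m hm n hn => ?_⟩
    have hN0 : 0 < N := Nat.succ_pos _
    have hm0 : 0 < m := lt_of_lt_of_le hN0 hm
    have hn0 : 0 < n := lt_of_lt_of_le hN0 hn
    have hm' : (0 : ℝ) < m := by exact_mod_cast hm0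
    have hn' : (0 : ℝ) < n := by exact_mod_cast hn0
    have hN' : (0 : ℝ) < N := by exact_mod_cast hN0
    have key := quasi_pair_bound hC g hm0 hn0
    have h1 : C / m ≤ C / N := by
      apply div_le_div_of_nonneg_left hC0 hN'
      exact_mod_cast hm
    have h2 : C / n ≤ C / N := by
      apply div_le_div_of_nonneg_left hC0 hN'
      exact_mod_cast hn
    have hlt : 2 * C / ε < N := by
      calc 2 * C / ε < ⌊2 * C / ε⌋₊ + 1 := Nat.lt_floor_add_one _
        _ = N := by norm_num [hN]
    have h3 : C / N + C / N < ε := by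
      have h4 : 2 * C < ε * N := by
        rcases le_or_gt C 0 with h | h
        · nlinarith
        · have : 2 * C / ε < (N : ℝ) := hlt
          calc 2 * C = (2 * C / ε) * ε := by field_simp
            _ < N * ε := by nlinarith
            _ = ε * N := by ring
      rw [← add_div, div_lt_iff₀ hN']
      linarith
    rw [Real.dist_eq]
    calc |φ (g ^ m) / m - φ (g ^ n) / n| ≤ C / m + C / n := key
      _ ≤ C / N + C / N := add_le_add h1 h2
      _ < ε := h3
  obtain ⟨L, hL⟩ := cauchySeq_tendsto_of_complete hcauchy
  have heq : homog φ g = L := by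
    have hq : IsQuasimorphism φ := ⟨C, hC⟩
    simp only [homog, if_pos hq]
    exact hL.limUnder_eq
  rw [heq]
  exact hL

private lemma homog_one {φ : G → ℝ} (hφ : IsQuasimorphism φ) : homog φ 1 = 0 := by
  have h1 : Tendsto (fun n : ℕ => φ ((1 : G) ^ n) / n) atTop (nhds 0) := by
    simpa using tendsto_const_div_atTop_nhds_zero_nat (φ (1 : G))
  exact tendsto_nhds_unique (homog_tendsto hφ 1) h1

private lemma homog_pow {φ : G → ℝ} (hφ : IsQuasimorphism φ) (g : G) (m : ℕ) :
    homog φ (g ^ m) = m * homog φ g := by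
  rcases Nat.eq_zero_or_pos m with rfl | hm
  · simpa using homog_one hφ
  · have hmul : Tendsto (fun n : ℕ => m * n) atTop atTop :=
      tendsto_atTop_mono (fun n => Nat.le_mul_of_pos_left n hm) tendsto_id
    have hsub : Tendsto (fun n : ℕ => φ (g ^ (m * n)) / ((m * n : ℕ) : ℝ)) atTop
        (nhds (homog φ g)) := (homog_tendsto hφ g).comp hmul
    have h2 : Tendsto (fun n : ℕ => φ ((g ^ m) ^ n) / n) atTop (nhds (m * homog φ g)) := by
      have h3 := hsub.const_mul (m : ℝ)
      apply h3.congr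
      intro n
      rw [← pow_mul]
      push_cast
      rcases Nat.eq_zero_or_pos n with rfl | hn
      · simp
      · have hm' : (m : ℝ) ≠ 0 := by exact_mod_cast hm.ne'
        rw [mul_div_assoc', mul_div_mul_left _ _ hm']
    exact tendsto_nhds_unique (homog_tendsto hφ (g ^ m)) h2

private lemma homog_inv {φ : G → ℝ} (hφ : IsQuasimorphism φ) (g : G) :
    homog φ g⁻¹ = - homog φ g := by
  obtain ⟨C, hC⟩ := hφ
  have hφ' : IsQuasimorphism φ := ⟨C, hC⟩
  have h2 : Tendsto (fun n : ℕ => φ (g⁻¹ ^ n) / n) atTop (nhds (- homog φ g)) := by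
    apply tendsto_aux (K := C + |φ 1|) (homog_tendsto hφ' g).neg
    intro n hn
    have hn' : (0 : ℝ) < n := by exact_mod_cast hn
    have hb : |φ ((g ^ n)⁻¹) + φ (g ^ n)| ≤ C + |φ 1| := by
      have hc := hC (g ^ n) (g ^ n)⁻¹
      rw [mul_inv_cancel] at hc
      calc |φ ((g ^ n)⁻¹) + φ (g ^ n)|
          = |(φ 1 - φ (g ^ n) - φ ((g ^ n)⁻¹)) - φ 1| := by rw [← abs_neg]; congr 1; ring
        _ ≤ |φ 1 - φ (g ^ n) - φ ((g ^ n)⁻¹)| + |φ 1| := abs_sub _ _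
        _ ≤ C + |φ 1| := add_le_add hc le_rfl
    calc |φ (g⁻¹ ^ n) / n - -(φ (g ^ n) / n)|
        = |φ ((g ^ n)⁻¹) + φ (g ^ n)| / n := by
          rw [inv_pow, sub_neg_eq_add, ← add_div, abs_div, abs_of_pos hn']
      _ ≤ (C + |φ 1|) / n := by gcongr
  exact tendsto_nhds_unique (homog_tendsto hφ' g⁻¹) h2

private lemma abs_div_div {x y C : ℝ} {n : ℕ} (hn : 0 < n) (h : |x - y| ≤ C) :
    |x / n - y / n| ≤ C / n := by
  have hn' : (0 : ℝ) < n := by exact_mod_cast hn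
  rw [div_sub_div_same, abs_div, abs_of_pos hn']
  gcongr

private lemma homog_dist {φ : G → ℝ} {C : ℝ}
    (hC : ∀ g h : G, |φ (g * h) - φ g - φ h| ≤ C) (g : G) :
    |homog φ g - φ g| ≤ C := by
  have hφ : IsQuasimorphism φ := ⟨C, hC⟩
  have ht : Tendsto (fun n : ℕ => |φ (g ^ n) / n - φ g|) atTop
      (nhds |homog φ g - φ g|) := ((homog_tendsto hφ g).sub_const _).abs
  apply le_of_tendsto ht
  filter_upwards [eventually_gt_atTop 0] with n hn
  have hn' : (0 : ℝ) < n := by exact_mod_cast hn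
  have hb := quasi_pow_bound' hC g hn
  have h1 : φ g = ((n : ℝ) * φ g) / n := by field_simp
  calc |φ (g ^ n) / n - φ g| = |φ (g ^ n) / n - ((n : ℝ) * φ g) / n| := by rw [← h1]
    _ ≤ ((n : ℝ) * C) / n := abs_div_div hn hb
    _ = C := by field_simp

end Homog

/-- `H¹_{/b}(G) ≅ Q(G)`: a 1-cochain has bounded coboundary iff it is a
quasimorphism, and classes are taken modulo bounded 1-cochains.  Concretely,
there is an ℝ-linear map `h` (homogenization) on quasimorphisms, landing in and
restricting to the identity on homogeneous quasimorphisms, with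
`h φ = h ψ` iff `φ − ψ` is bounded; hence the quotient of quasimorphisms by
bounded 1-cochains is isomorphic to the space `Q(G)` of homogeneous
quasimorphisms. -/
theorem stmt8 {G : Type*} [Group G] :
    ∃ h : (G → ℝ) → (G → ℝ),
      (∀ φ, IsQuasimorphism φ →
        (IsQuasimorphism (h φ) ∧ IsHomogeneous (h φ) ∧
          ∃ C : ℝ, ∀ g, |h φ g - φ g| ≤ C)) ∧
      (∀ φ ψ, IsQuasimorphism φ → IsQuasimorphism ψ →
        h (φ + ψ) = h φ + h ψ) ∧
      (∀ (c : ℝ) (φ), IsQuasimorphism φ → h (c • φ) = c • h φ) ∧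
      (∀ ψ, IsQuasimorphism ψ → IsHomogeneous ψ → h ψ = ψ) ∧
      (∀ φ ψ, IsQuasimorphism φ → IsQuasimorphism ψ →
        (h φ = h ψ ↔ ∃ C : ℝ, ∀ g, |φ g - ψ g| ≤ C)) := by
  refine ⟨homog, ?_, ?_, ?_, ?_, ?_⟩
  · -- quasimorphism, homogeneous, bounded distance
    intro φ hφ
    obtain ⟨C, hC⟩ := hφ
    have hφ' : IsQuasimorphism φ := ⟨C, hC⟩
    have hbd : ∀ g, |homog φ g - φ g| ≤ C := fun g => homog_dist hC g
    refine ⟨⟨4 * C, fun g k => ?_⟩, ?_, ⟨C, hbd⟩⟩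
    · have a1 := abs_le.mp (hbd (g * k))
      have a2 := abs_le.mp (hbd g)
      have a3 := abs_le.mp (hbd k)
      have a4 := abs_le.mp (hC g k)
      exact abs_le.mpr ⟨by linarith [a1.1, a1.2, a2.1, a2.2, a3.1, a3.2, a4.1, a4.2],
        by linarith [a1.1, a1.2, a2.1, a2.2, a3.1, a3.2, a4.1, a4.2]⟩
    · intro g z
      cases z with
      | ofNat n =>
          have hp := homog_pow hφ' g n
          rw [Int.ofNat_eq_coe, zpow_natCast, hp]
          push_cast
          ring
      | negSucc n =>
          rw [zpow_negSucc, homog_inv hφ', homog_pow hφ']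
          push_cast
          ring
  · -- additivity
    intro φ ψ hφ hψ
    obtain ⟨Cφ, hCφ⟩ := hφ
    obtain ⟨Cψ, hCψ⟩ := hψ
    have hφ' : IsQuasimorphism φ := ⟨Cφ, hCφ⟩
    have hψ' : IsQuasimorphism ψ := ⟨Cψ, hCψ⟩
    have hsum : IsQuasimorphism (φ + ψ) := by
      refine ⟨Cφ + Cψ, fun a b => ?_⟩
      simp only [Pi.add_apply]
      calc |φ (a * b) + ψ (a * b) - (φ a + ψ a) - (φ b + ψ b)|
          = |(φ (a * b) - φ a - φ b) + (ψ (a * b) - ψ a - ψ b)| := by congr 1; ring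
        _ ≤ |φ (a * b) - φ a - φ b| + |ψ (a * b) - ψ a - ψ b| := abs_add_le _ _
        _ ≤ Cφ + Cψ := add_le_add (hCφ a b) (hCψ a b)
    funext g
    have ht : Tendsto (fun n : ℕ => (φ + ψ) (g ^ n) / n) atTop
        (nhds (homog φ g + homog ψ g)) := by
      apply ((homog_tendsto hφ' g).add (homog_tendsto hψ' g)).congr
      intro n
      simp [add_div]
    exact tendsto_nhds_unique (homog_tendsto hsum g) ht
  · -- scalars
    intro c φ hφ
    obtain ⟨C, hC⟩ := hφ
    have hφ' : IsQuasimorphism φ := ⟨C, hC⟩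
    have hsc : IsQuasimorphism (c • φ) := by
      refine ⟨|c| * C, fun a b => ?_⟩
      simp only [Pi.smul_apply, smul_eq_mul]
      calc |c * φ (a * b) - c * φ a - c * φ b| = |c * (φ (a * b) - φ a - φ b)| := by
            congr 1; ring
        _ = |c| * |φ (a * b) - φ a - φ b| := abs_mul _ _
        _ ≤ |c| * C := mul_le_mul_of_nonneg_left (hC a b) (abs_nonneg c)
    funext g
    have ht : Tendsto (fun n : ℕ => (c • φ) (g ^ n) / n) atTop
        (nhds (c * homog φ g)) := by
      apply ((homog_tendsto hφ' g).const_mul c).congr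
      intro n
      simp [mul_div_assoc]
    exact tendsto_nhds_unique (homog_tendsto hsc g) ht
  · -- identity on homogeneous quasimorphisms
    intro ψ hψq hψh
    funext g
    have ht : Tendsto (fun n : ℕ => ψ (g ^ n) / n) atTop (nhds (ψ g)) := by
      apply Tendsto.congr' _ tendsto_const_nhds
      filter_upwards [eventually_gt_atTop 0] with n hn
      have h := hψh g (n : ℤ)
      rw [zpow_natCast] at h
      have hn' : (n : ℝ) ≠ 0 := by positivity
      rw [h]
      push_cast
      field_simp
    exact tendsto_nhds_unique (homog_tendsto hψq g) ht
  · -- equality iff bounded difference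
    intro φ ψ hφ hψ
    obtain ⟨Cφ, hCφ⟩ := hφ
    obtain ⟨Cψ, hCψ⟩ := hψ
    have hφ' : IsQuasimorphism φ := ⟨Cφ, hCφ⟩
    have hψ' : IsQuasimorphism ψ := ⟨Cψ, hCψ⟩
    constructor
    · intro he
      refine ⟨Cφ + Cψ, fun g => ?_⟩
      have h1 := abs_le.mp (homog_dist hCφ g)
      have h2 := abs_le.mp (homog_dist hCψ g)
      have he' : homog φ g = homog ψ g := congrFun he g
      exact abs_le.mpr ⟨by linarith [h1.1, h1.2, h2.1, h2.2],
        by linarith [h1.1, h1.2, h2.1, h2.2]⟩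
    · rintro ⟨C, hc⟩
      funext g
      apply tendsto_nhds_unique (homog_tendsto hφ' g)
      apply tendsto_aux (K := C) (homog_tendsto hψ' g)
      intro n hn
      exact abs_div_div hn (hc (g ^ n))
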